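/- Let F(x) = λ||x||_1^2/||x||_2^2 + q(Ax−b) on X \ {0}, where q is continuous and nonnegative, λ > 0, X ⊆ R^n closed with 0 ∈ X, and let ν* = inf over X \ {0} of F. If {x^k} ⊆ X \ {0} is a minimizing sequence (F(x^k) → ν*), ν* < λ + q(−b), and x^k converges to some x*, then x* ∈ X \ {0} and F(x*) = ν* (i.e., any accumulation point of a minimizing sequence is an optimal solution). -/

import Mathlib

open Filter Topology

lemma aux_sum_sq_pos {n : ℕ} {x : Fin n → ℝ} (hx : x ≠ 0) : 0 < ∑ i, (x i) ^ 2 := by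
  obtain ⟨i, hi⟩ := Function.ne_iff.mp hx
  exact Finset.sum_pos' (fun j _ => sq_nonneg _) ⟨i, Finset.mem_univ i, by exact pow_pos (abs_pos.mpr hi) 2 |>.trans_eq (sq_abs _)⟩

lemma aux_sum_sq_le {n : ℕ} (x : Fin n → ℝ) :
    (∑ i, (x i) ^ 2) ≤ (∑ i, |x i|) ^ 2 := by
  have hS : ∀ i : Fin n, |x i| ≤ ∑ j, |x j| :=
    fun i => Finset.single_le_sum (f := fun j => |x j|) (fun j _ => abs_nonneg _) (Finset.mem_univ i)
  calc ∑ i, (x i) ^ 2 = ∑ i, |x i| * |x i| := by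
        simp [sq, abs_mul_abs_self]
    _ ≤ ∑ i, |x i| * (∑ j, |x j|) :=
        Finset.sum_le_sum fun i _ => mul_le_mul_of_nonneg_left (hS i) (abs_nonneg _)
    _ = (∑ i, |x i|) ^ 2 := by rw [← Finset.sum_mul]; ring

/-- Any limit of a minimizing sequence of the squared `L1/L2` regularized
problem is an optimal solution, provided `ν* < λ + q(−b)`. -/
theorem limit_of_minimizing_sequence_is_optimal {m n : ℕ}
    (A : Matrix (Fin m) (Fin n) ℝ) (b : Fin m → ℝ)
    (lam : ℝ) (hlam : 0 < lam) (q : (Fin m → ℝ) → ℝ)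
    (hq : Continuous q) (hq0 : ∀ y, 0 ≤ q y)
    (X : Set (Fin n → ℝ)) (hX : IsClosed X) (h0X : (0 : Fin n → ℝ) ∈ X)
    (F : (Fin n → ℝ) → ℝ)
    (hF : ∀ x, F x = lam * ((∑ i, |x i|) ^ 2 / (∑ i, (x i) ^ 2)) + q (A.mulVec x - b))
    (nustar : ℝ)
    (hnu : IsGLB (F '' (X \ {0})) nustar)
    (hlt : nustar < lam + q (-b))
    (xk : ℕ → (Fin n → ℝ)) (hxk : ∀ k, xk k ∈ X \ {0})
    (hmin : Tendsto (fun k => F (xk k)) atTop (𝓝 nustar))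
    (xstar : Fin n → ℝ) (hconv : Tendsto xk atTop (𝓝 xstar)) :
    xstar ∈ X \ {0} ∧ F xstar = nustar := by
  have hcont_f : Continuous fun x : Fin n → ℝ => ∑ i, |x i| :=
    continuous_finset_sum _ fun i _ => (continuous_apply i).abs
  have hcont_g : Continuous fun x : Fin n → ℝ => ∑ i, (x i) ^ 2 :=
    continuous_finset_sum _ fun i _ => (continuous_apply i).pow 2
  have hcont_mv : Continuous fun x : Fin n → ℝ => A.mulVec x := by
    apply continuous_pi
    intro i
    simp only [Matrix.mulVec, dotProduct]
    exact continuous_finset_sum _ fun j _ => continuous_const.mul (continuous_apply j)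
  have hcont_q : Continuous fun x : Fin n → ℝ => q (A.mulVec x - b) :=
    hq.comp (hcont_mv.sub continuous_const)
  -- xstar ≠ 0
  have hxstar_ne : xstar ≠ 0 := by
    intro h0
    have hqlim : Tendsto (fun k => q (A.mulVec (xk k) - b)) atTop (𝓝 (q (-b))) := by
      have := (hcont_q.tendsto xstar).comp hconv
      simpa [h0, Matrix.mulVec_zero, Function.comp_def] using this
    have hge : ∀ k, lam + q (A.mulVec (xk k) - b) ≤ F (xk k) := by
      intro k
      have hne : xk k ≠ 0 := (hxk k).2
      have hg : 0 < ∑ i, (xk k i) ^ 2 := aux_sum_sq_pos hne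
      have h1 : (1 : ℝ) ≤ (∑ i, |xk k i|) ^ 2 / (∑ i, (xk k i) ^ 2) :=
        (one_le_div hg).mpr (aux_sum_sq_le _)
      have := mul_le_mul_of_nonneg_left h1 hlam.le
      rw [hF]
      linarith
    have : lam + q (-b) ≤ nustar :=
      le_of_tendsto_of_tendsto' (tendsto_const_nhds.add hqlim) hmin hge
    linarith
  have hxstarX : xstar ∈ X :=
    hX.mem_of_tendsto hconv (Filter.Eventually.of_forall fun k => (hxk k).1)
  have hg : (∑ i, (xstar i) ^ 2) ≠ 0 := (aux_sum_sq_pos hxstar_ne).ne'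
  have hFeq : F = fun x => lam * ((∑ i, |x i|) ^ 2 / (∑ i, (x i) ^ 2)) + q (A.mulVec x - b) :=
    funext hF
  have hFc : Tendsto (fun k => F (xk k)) atTop (𝓝 (F xstar)) := by
    have hca : ContinuousAt F xstar := by
      rw [hFeq]
      exact (continuousAt_const.mul
        (((hcont_f.pow 2).continuousAt).div hcont_g.continuousAt hg)).add
        hcont_q.continuousAt
    exact (hca.tendsto).comp hconv
  exact ⟨⟨hxstarX, by simpa using hxstar_ne⟩, tendsto_nhds_unique hFc hmin⟩
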